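/- For any p ∈ [2, ∞], the ellipsoid achieving Γ_p of an ellipsoid is itself: if E = A·B₂^d + u, then Γ_p(E) = sqrt(tr_{p/2}(A Aᵀ)). -/

import Mathlib

open scoped ENNReal
open MeasureTheory ProbabilityTheory Matrix Set Bornology

/-- The `ℓ_p` norm of a finite-dimensional real vector, `p ∈ [1,∞]`. -/
noncomputable def pnorm (p : ℝ≥0∞) {ι : Type*} [Fintype ι] (x : ι → ℝ) : ℝ :=
  if p = ∞ then ⨆ i, |x i| else (∑ i, |x i| ^ p.toReal) ^ (1 / p.toReal)

/-- `tr_p M`: the `ℓ_p` norm of the diagonal of a square matrix. -/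
noncomputable def trp (p : ℝ≥0∞) {ι : Type*} [Fintype ι] (M : Matrix ι ι ℝ) : ℝ :=
  pnorm p (fun i => M i i)

/-- The closed Euclidean unit ball. -/
def ball2 (ι : Type*) [Fintype ι] : Set (ι → ℝ) := {x | ∑ i, (x i) ^ 2 ≤ 1}

/-- `Γ_p(K) = inf { sqrt(tr_{p/2}(A Aᵀ)) : ∃ v, K + v ⊆ A · B₂ }`. -/
noncomputable def Gamma (p : ℝ≥0∞) {ι : Type*} [Fintype ι] [DecidableEq ι]
    (K : Set (ι → ℝ)) : ℝ :=
  sInf {r : ℝ | ∃ A : Matrix ι ι ℝ,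
    r = Real.sqrt (trp (p / 2) (A * Aᵀ)) ∧
    ∃ v : ι → ℝ, (fun x => x + v) '' K ⊆ (fun x => A.mulVec x) '' ball2 ι}

/-- The support function `h_K(θ) = sup_{x ∈ K} ⟨x, θ⟩`. -/
noncomputable def suppFn {ι : Type*} [Fintype ι] (K : Set (ι → ℝ)) (θ : ι → ℝ) : ℝ :=
  sSup ((fun x => ∑ i, x i * θ i) '' K)

/-- The width function `w_K(θ) = sup_{x ∈ K} ⟨x, θ⟩ - inf_{x ∈ K} ⟨x, θ⟩`. -/
noncomputable def widthFn {ι : Type*} [Fintype ι] (K : Set (ι → ℝ)) (θ : ι → ℝ) : ℝ :=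
  sSup ((fun x => ∑ i, x i * θ i) '' K) - sInf ((fun x => ∑ i, x i * θ i) '' K)


private lemma cs_bound' {d : ℕ} (B : Matrix (Fin d) (Fin d) ℝ) (y : Fin d → ℝ)
    (hy : y ∈ ball2 (Fin d)) (i : Fin d) :
    |∑ j, B i j * y j| ≤ Real.sqrt (∑ j, (B i j) ^ 2) := by
  have h1 : (∑ j, B i j * y j) ^ 2 ≤ (∑ j, (B i j) ^ 2) * (∑ j, (y j) ^ 2) :=
    Finset.sum_mul_sq_le_sq_mul_sq _ _ _
  have h2 : (∑ j, B i j * y j) ^ 2 ≤ ∑ j, (B i j) ^ 2 := by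
    refine h1.trans ?_
    calc (∑ j, (B i j) ^ 2) * (∑ j, (y j) ^ 2) ≤ (∑ j, (B i j) ^ 2) * 1 :=
          mul_le_mul_of_nonneg_left hy (by positivity)
      _ = ∑ j, (B i j) ^ 2 := mul_one _
  calc |∑ j, B i j * y j| = Real.sqrt ((∑ j, B i j * y j) ^ 2) := (Real.sqrt_sq_eq_abs _).symm
    _ ≤ _ := Real.sqrt_le_sqrt h2

private lemma diag_le' {d : ℕ} (A B : Matrix (Fin d) (Fin d) ℝ) (w : Fin d → ℝ)
    (h : ∀ x ∈ ball2 (Fin d), A.mulVec x + w ∈ (fun x => B.mulVec x) '' ball2 (Fin d))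
    (i : Fin d) : (A * Aᵀ) i i ≤ (B * Bᵀ) i i := by
  have hdiag : ∀ C : Matrix (Fin d) (Fin d) ℝ, (C * Cᵀ) i i = ∑ j, (C i j) ^ 2 := by
    intro C; simp [Matrix.mul_apply, sq]
  rw [hdiag, hdiag]
  set s : ℝ := Real.sqrt (∑ j, (A i j) ^ 2) with hs
  set t : ℝ := Real.sqrt (∑ j, (B i j) ^ 2) with ht
  have hA : ∑ j, (A i j) ^ 2 = s ^ 2 := (Real.sq_sqrt (by positivity)).symm
  have hst : s ≤ t := by
    rcases eq_or_lt_of_le (Real.sqrt_nonneg (∑ j, (A i j) ^ 2) : (0:ℝ) ≤ s) with h0 | h0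
    · have : s = 0 := h0.symm
      rw [this]; exact Real.sqrt_nonneg _
    · have hs0 : s ≠ 0 := ne_of_gt h0
      have key : ∀ ε : ℝ, ε = 1 ∨ ε = -1 → |ε * s + w i| ≤ t := by
        intro ε hε
        set x : Fin d → ℝ := fun j => ε * (A i j / s) with hx
        have hxball : x ∈ ball2 (Fin d) := by
          have hε2 : ε ^ 2 = 1 := by rcases hε with h | h <;> simp [h]
          have : ∑ j, (x j) ^ 2 = 1 := by
            simp only [hx, mul_pow, div_pow, hε2, one_mul]
            rw [← Finset.sum_div, hA, div_self (by positivity)]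
          exact le_of_eq this
        obtain ⟨y, hy, hxy⟩ := h x hxball
        have hAx : (A.mulVec x) i = ε * s := by
          show ∑ j, A i j * x j = ε * s
          calc ∑ j, A i j * x j = (ε / s) * ∑ j, (A i j) ^ 2 := by
                rw [Finset.mul_sum]; apply Finset.sum_congr rfl; intro j _; simp [hx]; ring
            _ = ε * s := by rw [hA]; field_simp
        have heq : ε * s + w i = ∑ j, B i j * y j := by
          have := congrFun hxy i
          simp only [Pi.add_apply] at this
          rw [← hAx, ← this]; rfl
        rw [heq]
        exact cs_bound' B y hy i
      have k1 := abs_le.1 (key 1 (Or.inl rfl))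
      have k2 := abs_le.1 (key (-1) (Or.inr rfl))
      have ht0 : 0 ≤ t := Real.sqrt_nonneg _
      simp only [one_mul, neg_one_mul] at k1 k2
      linarith [k1.2, k2.1]
  calc ∑ j, (A i j) ^ 2 = s ^ 2 := hA
    _ ≤ t ^ 2 := pow_le_pow_left₀ (Real.sqrt_nonneg _) hst 2
    _ = ∑ j, (B i j) ^ 2 := Real.sq_sqrt (by positivity)

private lemma pnorm_mono' (q : ℝ≥0∞) {ι : Type*} [Fintype ι] {x y : ι → ℝ}
    (hx : ∀ i, 0 ≤ x i) (hxy : ∀ i, x i ≤ y i) : pnorm q x ≤ pnorm q y := by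
  unfold pnorm
  split_ifs with h
  · rcases isEmpty_or_nonempty ι with hι | hι
    · simp [ciSup_of_empty]
    · apply ciSup_mono (Finite.bddAbove_range _)
      intro i
      rw [abs_of_nonneg (hx i), abs_of_nonneg ((hx i).trans (hxy i))]
      exact hxy i
  · apply Real.rpow_le_rpow (by positivity)
    · apply Finset.sum_le_sum
      intro i _
      rw [abs_of_nonneg (hx i), abs_of_nonneg ((hx i).trans (hxy i))]
      exact Real.rpow_le_rpow (hx i) (hxy i) ENNReal.toReal_nonneg
    · positivity

/-- For `p ∈ [2,∞]` and an ellipsoid `E = A·B₂^d + u`,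
`Γ_p(E) = sqrt(tr_{p/2}(A Aᵀ))`. -/
theorem Gamma_ellipsoid {d : ℕ} (p : ℝ≥0∞) (hp : 2 ≤ p)
    (A : Matrix (Fin d) (Fin d) ℝ) (u : Fin d → ℝ) :
    Gamma p ((fun y => A.mulVec y + u) '' ball2 (Fin d)) =
      Real.sqrt (trp (p / 2) (A * Aᵀ)) := by
  have hdiagnn : ∀ (C : Matrix (Fin d) (Fin d) ℝ) (i : Fin d), 0 ≤ (C * Cᵀ) i i := by
    intro C i
    simp only [Matrix.mul_apply, Matrix.transpose_apply]
    exact Finset.sum_nonneg fun j _ => mul_self_nonneg _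
  apply le_antisymm
  · apply csInf_le
    · exact ⟨0, fun r ⟨B, hr, _⟩ => hr ▸ Real.sqrt_nonneg _⟩
    · refine ⟨A, rfl, -u, ?_⟩
      rintro _ ⟨_, ⟨x, hx, rfl⟩, rfl⟩
      exact ⟨x, hx, by simp⟩
  · apply le_csInf
    · exact ⟨Real.sqrt (trp (p / 2) (A * Aᵀ)), A, rfl, -u, by
        rintro _ ⟨_, ⟨x, hx, rfl⟩, rfl⟩; exact ⟨x, hx, by simp⟩⟩
    · rintro r ⟨B, rfl, v, hsub⟩
      apply Real.sqrt_le_sqrt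
      apply pnorm_mono' (p / 2) (fun i => hdiagnn A i)
      intro i
      apply diag_le' A B (u + v) _ i
      intro x hx
      have : A.mulVec x + (u + v) = (fun z => z + v) ((fun y => A.mulVec y + u) x) := by
        simp [add_assoc]
      rw [this]
      exact hsub ⟨(fun y => A.mulVec y + u) x, ⟨x, hx, rfl⟩, rfl⟩
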